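/- (Non-negativity) Let q > 0 and let k ∈ ℤ. Then for every i with 0 ≤ i ≤ n and every x ∈ [kπ/2, (k+1)π/2], the quantum trigonometric Bernstein basis function of degree n on [kπ/2, (k+1)π/2] satisfies B^n_i(x;q) ≥ 0. -/
import Mathlib


/-- `d(x,y;c) = ((c+1)/2)·sin(y−x) + ((c−1)/2)·sin(y+x)`. -/
noncomputable def dq (x y c : ℝ) : ℝ :=
  (c + 1) / 2 * Real.sin (y - x) + (c - 1) / 2 * Real.sin (y + x)

/-- The q-integer `[k]_q = 1 + q + ⋯ + q^{k−1}`. -/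
noncomputable def qInt (q : ℝ) (k : ℕ) : ℝ := ∑ i ∈ Finset.range k, q ^ i

/-- The q-factorial `[k]_q!`. -/
noncomputable def qFact (q : ℝ) : ℕ → ℝ
  | 0 => 1
  | k + 1 => qInt q (k + 1) * qFact q k

/-- The q-binomial coefficient `[n choose k]_q`. -/
noncomputable def qBinom (q : ℝ) (n k : ℕ) : ℝ :=
  qFact q n / (qFact q k * qFact q (n - k))

/-- Quantum trigonometric Bernstein basis function `B^n_k(x;q)` on `[a,b]`. -/
noncomputable def qBern (q a b : ℝ) (n k : ℕ) (x : ℝ) : ℝ :=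
  qBinom q n k *
    ((∏ i ∈ Finset.range k, dq a x (q ^ i)) * ∏ i ∈ Finset.range (n - k), dq x b (q ^ i)) /
    ∏ i ∈ Finset.range n, dq a b (q ^ i)

/-- A matrix is totally positive if all its minors are nonnegative. -/
def IsTotallyPositive {p r : ℕ} (M : Matrix (Fin p) (Fin r) ℝ) : Prop :=
  ∀ (k : ℕ) (f : Fin k → Fin p) (g : Fin k → Fin r),
    StrictMono f → StrictMono g → 0 ≤ (M.submatrix f g).det

/-- A system of functions is totally positive on `I` if all its collocation matrices at
increasing points of `I` are totally positive. -/
def IsTotallyPositiveSystem (I : Set ℝ) {n : ℕ} (φ : Fin n → ℝ → ℝ) : Prop :=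
  ∀ (m : ℕ) (x : Fin (m + 1) → ℝ), StrictMono x → (∀ j, x j ∈ I) →
    IsTotallyPositive (Matrix.of fun i j => φ i (x j))

/-- Number of sign changes between consecutive entries of a list. -/
noncomputable def signChanges : List ℝ → ℕ
  | [] => 0
  | [_] => 0
  | a :: b :: t => (if a * b < 0 then 1 else 0) + signChanges (b :: t)

/-- `S⁻(v)`: the number of strict sign changes of a finite real sequence, i.e. the number
of sign changes after deleting all zero entries. -/
noncomputable def strictSignChanges (v : List ℝ) : ℕ :=
  signChanges (v.filter fun x => x ≠ 0)

/-- Rational quantum trigonometric Bernstein basis function `R^n_k(x;q)` with weights `w`. -/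
noncomputable def rqBern (q a b : ℝ) (n : ℕ) (w : Fin (n + 1) → ℝ) (k : Fin (n + 1)) (x : ℝ) : ℝ :=
  w k * qBern q a b n k x / ∑ i : Fin (n + 1), w i * qBern q a b n i x

lemma dq_left_eq (a t c : ℝ) (h : Real.sin a * Real.cos a = 0) :
    dq a (a + t) c = Real.sin t * (c * Real.cos a ^ 2 + Real.sin a ^ 2) := by
  unfold dq
  have e1 : a + t - a = t := by ring
  have e2 : a + t + a = a + (t + a) := by ring
  rw [e1, e2, Real.sin_add, Real.sin_add, Real.cos_add]
  have p := Real.sin_sq_add_cos_sq a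
  linear_combination ((c - 1) * Real.cos t) * h - ((c + 1) / 2 * Real.sin t) * p

lemma dq_right_eq (b s c : ℝ) (h : Real.sin b * Real.cos b = 0) :
    dq (b - s) b c = Real.sin s * (c * Real.sin b ^ 2 + Real.cos b ^ 2) := by
  unfold dq
  have e1 : b - (b - s) = s := by ring
  have e2 : b + (b - s) = b + (b - s) := rfl
  rw [e1, show b + (b - s) = b + (b - s) from rfl, Real.sin_add, Real.sin_sub, Real.cos_sub]
  have p := Real.sin_sq_add_cos_sq b
  linear_combination ((c - 1) * Real.cos s) * h - ((c + 1) / 2 * Real.sin s) * p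

lemma mix_pos {c sa ca : ℝ} (hc : 0 < c) (p : sa ^ 2 + ca ^ 2 = 1) :
    0 < c * ca ^ 2 + sa ^ 2 := by
  rcases le_total c 1 with h | h
  · nlinarith [sq_nonneg sa, sq_nonneg ca]
  · nlinarith [sq_nonneg sa, sq_nonneg ca]

lemma qFact_pos {q : ℝ} (hq : 0 < q) (m : ℕ) : 0 < qFact q m := by
  induction m with
  | zero => norm_num [qFact]
  | succ m ih =>
    have : 0 < qInt q (m + 1) :=
      Finset.sum_pos (fun i _ => pow_pos hq i) (Finset.nonempty_range_iff.mpr (Nat.succ_ne_zero m))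
    exact mul_pos this ih

lemma qBinom_pos {q : ℝ} (hq : 0 < q) (n k : ℕ) : 0 < qBinom q n k :=
  div_pos (qFact_pos hq n) (mul_pos (qFact_pos hq k) (qFact_pos hq (n - k)))

/-- Non-negativity: for `q > 0` and `k ∈ ℤ`, the quantum trigonometric Bernstein basis
functions are nonnegative on `[kπ/2, (k+1)π/2]`. -/
theorem qBern_nonneg (n : ℕ) (q : ℝ) (hq : 0 < q) (k : ℤ) (i : ℕ) (hi : i ≤ n) (x : ℝ)
    (hx : x ∈ Set.Icc ((k : ℝ) * Real.pi / 2) (((k : ℝ) + 1) * Real.pi / 2)) :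
    0 ≤ qBern q ((k : ℝ) * Real.pi / 2) (((k : ℝ) + 1) * Real.pi / 2) n i x := by
  obtain ⟨hx1, hx2⟩ := hx
  set a : ℝ := (k : ℝ) * Real.pi / 2 with ha
  set b : ℝ := ((k : ℝ) + 1) * Real.pi / 2 with hb
  have pi_pos := Real.pi_pos
  have ha0 : Real.sin a * Real.cos a = 0 := by
    have h2 : Real.sin (2 * a) = 0 := by
      rw [show 2 * a = (k : ℝ) * Real.pi by rw [ha]; ring]
      exact Real.sin_int_mul_pi k
    rw [Real.sin_two_mul] at h2
    linarith
  have hb0 : Real.sin b * Real.cos b = 0 := by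
    have h2 : Real.sin (2 * b) = 0 := by
      rw [show 2 * b = ((k + 1 : ℤ) : ℝ) * Real.pi by push_cast; rw [hb]; ring]
      exact Real.sin_int_mul_pi (k + 1)
    rw [Real.sin_two_mul] at h2
    linarith
  have hba : b = a + Real.pi / 2 := by rw [ha, hb]; ring
  -- sin of offsets nonneg
  have hsin_t : 0 ≤ Real.sin (x - a) :=
    Real.sin_nonneg_of_nonneg_of_le_pi (by linarith) (by linarith [hba ▸ hx2])
  have hsin_s : 0 ≤ Real.sin (b - x) :=
    Real.sin_nonneg_of_nonneg_of_le_pi (by linarith) (by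
      have : b - x ≤ Real.pi / 2 := by rw [hba]; linarith
      linarith)
  have pa := Real.sin_sq_add_cos_sq a
  have pb := Real.sin_sq_add_cos_sq b
  -- factor nonnegativity
  have hleft : ∀ j : ℕ, 0 ≤ dq a x (q ^ j) := by
    intro j
    have := dq_left_eq a (x - a) (q ^ j) ha0
    rw [show a + (x - a) = x by ring] at this
    rw [this]
    exact mul_nonneg hsin_t (mix_pos (pow_pos hq j) pa).le
  have hright : ∀ j : ℕ, 0 ≤ dq x b (q ^ j) := by
    intro j
    have := dq_right_eq b (b - x) (q ^ j) hb0
    rw [show b - (b - x) = x by ring] at this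
    rw [this]
    exact mul_nonneg hsin_s (mix_pos (pow_pos hq j) (by linarith [pb])).le
  have hden : ∀ j : ℕ, 0 < dq a b (q ^ j) := by
    intro j
    have := dq_left_eq a (Real.pi / 2) (q ^ j) ha0
    rw [← hba, Real.sin_pi_div_two] at this
    rw [this, one_mul]
    exact mix_pos (pow_pos hq j) pa
  unfold qBern
  apply div_nonneg
  · exact mul_nonneg (qBinom_pos hq n i).le
      (mul_nonneg (Finset.prod_nonneg fun j _ => hleft j)
        (Finset.prod_nonneg fun j _ => hright j))
  · exact (Finset.prod_pos fun j _ => hden j).le
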